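/- Let G and H be real Hilbert spaces, let L, C : G → H be bounded linear operators with C compact, and assume that L − λ₀C is bijective for some λ₀ ∈ ℝ. Let (λ*, x*) be a simple eigenpoint, i.e. ‖x*‖ = 1, ker(L − λ*C) = ℝx*, and Cx* ∉ range(L − λ*C), and set T = L − λ*C. Then the bounded linear operator A : ℝ × {x*}ᗮ → H defined by A(λ̇, ẋ) = Tẋ − λ̇Cx* is bijective, and likewise the operator (λ̇, ẋ) ↦ Tẋ + λ̇Cx* is bijective. (Here {x*}ᗮ denotes the orthogonal complement of x* in G.) -/

import Mathlib

open Filter Topology RealInnerProductSpace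

lemma compact_subseq {E F : Type*} [NormedAddCommGroup E] [NormedSpace ℝ E]
    [NormedAddCommGroup F] [NormedSpace ℝ F]
    {K : E →L[ℝ] F} (hK : IsCompactOperator ⇑K) (u : ℕ → E) (R : ℝ)
    (hu : ∀ n, ‖u n‖ ≤ R) :
    ∃ y, ∃ φ : ℕ → ℕ, StrictMono φ ∧ Tendsto (fun n => K (u (φ n))) atTop (𝓝 y) := by
  have hcomp : IsCompact (closure ((K : E →ₗ[ℝ] F) '' Metric.closedBall 0 (max R 1))) :=
    IsCompactOperator.isCompact_closure_image_closedBall (𝕜₁ := ℝ)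
      (f := (K : E →ₗ[ℝ] F)) hK (max R 1)
  have hmem : ∀ n, K (u n) ∈ closure ((K : E →ₗ[ℝ] F) '' Metric.closedBall 0 (max R 1)) := by
    intro n
    apply subset_closure
    exact ⟨u n, by simpa using le_trans (hu n) (le_max_left _ _), rfl⟩
  obtain ⟨y, -, φ, hφ, hconv⟩ := hcomp.tendsto_subseq hmem
  exact ⟨y, φ, hφ, hconv⟩

lemma riesz_bounded_below {E : Type*} [NormedAddCommGroup E] [NormedSpace ℝ E]
    {K : E →L[ℝ] E} (hK : IsCompactOperator ⇑K)
    (hinj : Function.Injective ⇑(1 - K)) :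
    ∃ c : ℝ, 0 < c ∧ ∀ x, c * ‖x‖ ≤ ‖x - K x‖ := by
  by_contra hcon
  push_neg at hcon
  have key : ∀ n : ℕ, ∃ u : E, ‖u‖ = 1 ∧ ‖u - K u‖ < 1 / (n + 1) := by
    intro n
    obtain ⟨x, hx⟩ := hcon (1 / (n + 1)) (by positivity)
    have hxne : x ≠ 0 := by
      rintro rfl
      simp at hx
    have hxn : (0:ℝ) < ‖x‖ := norm_pos_iff.2 hxne
    refine ⟨‖x‖⁻¹ • x, by simp [norm_smul, abs_of_pos, hxn, inv_mul_cancel₀ hxn.ne'], ?_⟩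
    have : ‖x‖⁻¹ • x - K (‖x‖⁻¹ • x) = ‖x‖⁻¹ • (x - K x) := by
      simp [map_smul, smul_sub]
    rw [this, norm_smul, norm_inv, norm_norm]
    rw [inv_mul_lt_iff₀ hxn]
    calc ‖x - K x‖ < 1 / (n+1) * ‖x‖ := hx
      _ = ‖x‖ * (1/(n+1)) := by ring
      _ = _ := by ring
  choose u hu1 hu2 using key
  obtain ⟨y, φ, hφ, hconv⟩ := compact_subseq hK u 1 (fun n => (hu1 n).le)
  have hzero : Tendsto (fun n => u (φ n) - K (u (φ n))) atTop (𝓝 0) := by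
    rw [tendsto_iff_norm_sub_tendsto_zero]
    apply squeeze_zero (fun n => norm_nonneg _) (fun n => ?_)
      (g := fun n => 1 / (φ n + 1))
    · exact tendsto_one_div_add_atTop_nhds_zero_nat.comp (hφ.tendsto_atTop)
    · simpa using (hu2 (φ n)).le
  have huconv : Tendsto (fun n => u (φ n)) atTop (𝓝 y) := by
    have := hzero.add hconv
    simpa using this
  have hy1 : ‖y‖ = 1 := by
    have : Tendsto (fun n => ‖u (φ n)‖) atTop (𝓝 ‖y‖) := huconv.norm
    exact tendsto_nhds_unique this (by simpa [hu1] using tendsto_const_nhds)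
  have hy0 : y - K y = 0 := by
    have h2 : Tendsto (fun n => u (φ n) - K (u (φ n))) atTop (𝓝 (y - K y)) :=
      huconv.sub ((K.continuous.tendsto y).comp huconv)
    exact tendsto_nhds_unique h2 hzero
  have : y = 0 := by
    have := hinj (a₁ := y) (a₂ := 0) (by simpa using hy0)
    exact this
  rw [this] at hy1
  simp at hy1

lemma closed_range_of_bounded_below {E F : Type*} [NormedAddCommGroup E] [NormedSpace ℝ E]
    [NormedAddCommGroup F] [NormedSpace ℝ F] [CompleteSpace E]
    (T : E →L[ℝ] F) {c : ℝ} (hc : 0 < c) (h : ∀ x, c * ‖x‖ ≤ ‖T x‖) :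
    IsClosed (Set.range ⇑T) := by
  have halip : AntilipschitzWith (⟨c, hc.le⟩ : NNReal)⁻¹ ⇑T := by
    apply AntilipschitzWith.of_le_mul_dist
    intro x y
    have := h (x - y)
    simp only [map_sub] at this
    rw [dist_eq_norm, dist_eq_norm]
    calc ‖x - y‖ = c⁻¹ * (c * ‖x - y‖) := by field_simp
      _ ≤ c⁻¹ * ‖T x - T y‖ := by
          apply mul_le_mul_of_nonneg_left this (by positivity)
      _ = _ := congrArg (fun a : ℝ => a * ‖T x - T y‖) (NNReal.coe_inv ⟨c, hc.le⟩).symm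
  exact halip.isClosed_range T.uniformContinuous

lemma riesz_surjective {E : Type*} [NormedAddCommGroup E] [InnerProductSpace ℝ E]
    [CompleteSpace E] {K : E →L[ℝ] E} (hK : IsCompactOperator ⇑K)
    (hinj : Function.Injective ⇑(1 - K)) :
    Function.Surjective ⇑(1 - K) := by
  set T : E →L[ℝ] E := 1 - K with hT
  -- powers are 1 - compact
  have hpow : ∀ n : ℕ, ∃ Kn : E →L[ℝ] E, IsCompactOperator ⇑Kn ∧ T ^ n = 1 - Kn := by
    intro n
    induction n with
    | zero => exact ⟨0, isCompactOperator_zero, by simp⟩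
    | succ n ih =>
      obtain ⟨Kn, hKn, hTn⟩ := ih
      refine ⟨K + Kn - Kn.comp K, ?_, ?_⟩
      · exact (hK.add hKn).sub (hK.clm_comp Kn)
      · rw [pow_succ, hTn, hT]
        ext x
        simp [ContinuousLinearMap.comp_apply, map_sub, sub_sub]
        abel
  have hpinj : ∀ n : ℕ, Function.Injective ⇑(T ^ n) := by
    intro n
    induction n with
    | zero => simpa using Function.injective_id
    | succ n ih =>
      have hc : ⇑(T ^ (n+1)) = ⇑(T ^ n) ∘ ⇑T := by
        ext v; simp [pow_succ, ContinuousLinearMap.mul_apply]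
      rw [hc]
      exact ih.comp hinj
  -- ranges are closed
  have hclosed : ∀ n : ℕ, IsClosed (Set.range ⇑(T ^ n)) := by
    intro n
    obtain ⟨Kn, hKn, hTn⟩ := hpow n
    have hinjn : Function.Injective ⇑(1 - Kn) := by rw [← hTn]; exact hpinj n
    obtain ⟨c, hc, hbdd⟩ := riesz_bounded_below hKn hinjn
    refine closed_range_of_bounded_below (T ^ n) hc (fun x => ?_)
    calc c * ‖x‖ ≤ ‖x - Kn x‖ := hbdd x
      _ = ‖(T ^ n) x‖ := by rw [hTn]; simp
  set V : ℕ → Submodule ℝ E := fun n => LinearMap.range ((T ^ n : E →L[ℝ] E) : E →ₗ[ℝ] E) with hV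
  have hVclosed : ∀ n, IsClosed (V n : Set E) := by
    intro n
    have : (V n : Set E) = Set.range ⇑(T ^ n) := by
      ext x; simp [hV, LinearMap.mem_range, Set.mem_range, Module.End.pow_apply]
    rw [this]; exact hclosed n
  have hmono : ∀ n, V (n + 1) ≤ V n := by
    intro n x hx
    obtain ⟨w, hw⟩ := hx
    refine ⟨T w, ?_⟩
    rw [← hw, pow_succ]
    simp
  have hmono' : ∀ {m n}, n ≤ m → V m ≤ V n := by
    intro m n h
    induction h with
    | refl => exact le_rfl
    | step h ih => exact le_trans (by exact hmono _) (by assumption)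
  by_contra hsurj
  obtain ⟨y, hyT⟩ : ∃ y, ∀ z, T z ≠ y := by
    by_contra h
    push_neg at h
    exact hsurj fun y => h y
  -- strictness
  have hstrict : ∀ n, (T ^ n) y ∈ V n ∧ (T ^ n) y ∉ V (n + 1) := by
    intro n
    constructor
    · exact ⟨y, rfl⟩
    · rintro ⟨z, hz⟩
      simp only [pow_succ] at hz
      have : (T ^ n) (T z) = (T ^ n) y := by
        simpa [ContinuousLinearMap.comp_apply, Module.End.pow_apply] using hz
      exact hyT z (hpinj n this)
  -- orthogonal unit vectors
  have hpick : ∀ n, ∃ x : E, ‖x‖ = 1 ∧ x ∈ V n ∧ x ∈ (V (n + 1))ᗮ := by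
    intro n
    obtain ⟨hz1, hz2⟩ := hstrict n
    set z := (T ^ n) y
    haveI : CompleteSpace (V (n + 1)) := (hVclosed (n + 1)).completeSpace_coe
    set b := z - (Submodule.orthogonalProjection (V (n + 1)) z : E) with hb
    have hbV : b ∈ V n := by
      apply Submodule.sub_mem _ hz1
      exact hmono n (Submodule.orthogonalProjection (V (n + 1)) z).2
    have hbO : b ∈ (V (n + 1))ᗮ := Submodule.sub_starProjection_mem_orthogonal (K := V (n + 1)) z
    have hbne : b ≠ 0 := by
      intro h
      apply hz2
      have : z = (Submodule.orthogonalProjection (V (n + 1)) z : E) := by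
        rwa [sub_eq_zero] at h
      rw [this]
      exact (Submodule.orthogonalProjection (V (n + 1)) z).2
    have hbn : (0:ℝ) < ‖b‖ := norm_pos_iff.2 hbne
    refine ⟨‖b‖⁻¹ • b, by simp [norm_smul, abs_of_pos, hbn, inv_mul_cancel₀ hbn.ne'], ?_, ?_⟩
    · exact Submodule.smul_mem _ _ hbV
    · exact Submodule.smul_mem _ _ hbO
  choose x hx1 hx2 hx3 using hpick
  -- key separation estimate
  have hsep : ∀ m n : ℕ, n < m → 1 ≤ ‖K (x n) - K (x m)‖ := by
    intro m n hnm
    have hKeq : ∀ v, K v = v - T v := by intro v; simp [hT]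
    have hw : T (x n) + x m - T (x m) ∈ V (n + 1) := by
      have h1 : T (x n) ∈ V (n + 1) := by
        obtain ⟨a, ha⟩ := hx2 n
        refine ⟨a, ?_⟩
        rw [pow_succ']
        simp [ContinuousLinearMap.mul_apply, ← ha, Module.End.pow_apply]
      have h2 : x m ∈ V (n + 1) := hmono' hnm (hx2 m)
      have h3 : T (x m) ∈ V (n + 1) := by
        apply hmono' hnm
        obtain ⟨a, ha⟩ := hx2 m
        refine hmono m ⟨a, ?_⟩
        rw [pow_succ']
        simp [ContinuousLinearMap.mul_apply, ← ha, Module.End.pow_apply]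
      exact Submodule.sub_mem _ (Submodule.add_mem _ h1 h2) h3
    have heq : K (x n) - K (x m) = x n - (T (x n) + x m - T (x m)) := by
      rw [hKeq, hKeq]; abel
    rw [heq]
    set w := T (x n) + x m - T (x m)
    have horth : inner ℝ (x n) w = (0:ℝ) := by
      rw [real_inner_comm]; exact (hx3 n) w hw
    have : ‖x n - w‖ ^ 2 = ‖x n‖ ^ 2 + ‖w‖ ^ 2 := by
      rw [norm_sub_sq_real, horth]
      ring
    nlinarith [norm_nonneg (x n - w), norm_nonneg w, hx1 n]
  -- contradiction with compactness
  obtain ⟨z, φ, hφ, hconv⟩ := compact_subseq hK x 1 (fun n => (hx1 n).le)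
  have hcauchy := hconv.cauchySeq
  rw [Metric.cauchySeq_iff] at hcauchy
  obtain ⟨N, hN⟩ := hcauchy 1 one_pos
  have hlt := hN (N + 1) (by omega) N (by omega)
  rw [dist_eq_norm] at hlt
  have hφlt : φ N < φ (N + 1) := hφ (by omega)
  have h1 := hsep (φ (N + 1)) (φ N) hφlt
  rw [← norm_neg, neg_sub] at h1
  linarith

lemma rank_one_compact {H : Type*} [NormedAddCommGroup H] [NormedSpace ℝ H] (v : H) :
    IsCompactOperator (fun t : ℝ => t • v) := by
  refine ⟨(fun t : ℝ => t • v) '' Metric.closedBall 0 1, ?_, ?_⟩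
  · exact (isCompact_closedBall 0 1).image (by continuity)
  · exact Filter.mem_of_superset (Metric.closedBall_mem_nhds 0 one_pos)
      (Set.subset_preimage_image _ _)

/-- If `(λ*, x*)` is a simple eigenpoint of the problem `Lx = λCx`, `‖x‖ = 1`, and
`T = L − λ*C`, then the operator `(λ̇, ẋ) ↦ Tẋ − λ̇Cx*` from `ℝ × {x*}ᗮ` to `H` is bijective,
and likewise `(λ̇, ẋ) ↦ Tẋ + λ̇Cx*` is bijective. -/
theorem simple_eigenpoint_differential_bijective
    {G H : Type*} [NormedAddCommGroup G] [InnerProductSpace ℝ G] [CompleteSpace G]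
    [NormedAddCommGroup H] [InnerProductSpace ℝ H] [CompleteSpace H]
    (L C : G →L[ℝ] H) (hC : IsCompactOperator ⇑C)
    (lam0 : ℝ) (h0 : Function.Bijective ⇑(L - lam0 • C))
    (lamS : ℝ) (xs : G) (hxs : ‖xs‖ = 1)
    (hker : LinearMap.ker ((L - lamS • C : G →L[ℝ] H) : G →ₗ[ℝ] H) = Submodule.span ℝ {xs})
    (hrange : C xs ∉ LinearMap.range ((L - lamS • C : G →L[ℝ] H) : G →ₗ[ℝ] H)) :
    Function.Bijective
      (fun p : ℝ × ((Submodule.span ℝ {xs})ᗮ : Submodule ℝ G) =>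
        (L - lamS • C) (p.2 : G) - p.1 • C xs) ∧
    Function.Bijective
      (fun p : ℝ × ((Submodule.span ℝ {xs})ᗮ : Submodule ℝ G) =>
        (L - lamS • C) (p.2 : G) + p.1 • C xs) := by
  set T : G →L[ℝ] H := L - lamS • C with hTdef
  set S : G →L[ℝ] H := L - lam0 • C with hSdef
  let S' : G ≃L[ℝ] H := ContinuousLinearEquiv.ofBijective S
    (LinearMap.ker_eq_bot.2 h0.1) (LinearMap.range_eq_top.2 h0.2)
  have hS'app : ∀ x, S' x = S x := fun x => rfl
  set r : G →L[ℝ] H := (innerSL ℝ xs).smulRight (C xs) with hrdef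
  have hrapp : ∀ x, r x = (inner ℝ xs x : ℝ) • C xs := fun x => rfl
  have hr_compact : IsCompactOperator ⇑r := by
    have h := (rank_one_compact (C xs)).comp_clm (innerSL ℝ xs)
    have : ⇑r = (fun t : ℝ => t • C xs) ∘ ⇑(innerSL ℝ xs) := by
      funext x; simp [hrapp]
    rw [this]; exact h
  set D : G →L[ℝ] H := (lamS - lam0) • C + r with hDdef
  have hD_compact : IsCompactOperator ⇑D := by
    have h1 : IsCompactOperator ⇑((lamS - lam0) • C) := by
      have := hC.smul (lamS - lam0)
      simpa using this
    have := h1.add hr_compact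
    have heq : ⇑D = ⇑((lamS - lam0) • C) + ⇑r := by funext x; simp [hDdef]
    rw [heq]; exact this
  set K : G →L[ℝ] G := (S'.symm : H →L[ℝ] G).comp D with hKdef
  have hK_compact : IsCompactOperator ⇑K := hD_compact.clm_comp (S'.symm : H →L[ℝ] G)
  set B : G →L[ℝ] H := T - r with hBdef
  have hBK : ∀ x, B x = S' ((1 - K) x) := by
    intro x
    have h1 : (1 - K) x = x - S'.symm (D x) := by simp [hKdef]
    rw [h1, map_sub, S'.apply_symm_apply, hS'app]
    simp only [hBdef, hDdef, hSdef, hTdef]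
    simp only [ContinuousLinearMap.sub_apply, ContinuousLinearMap.add_apply,
      ContinuousLinearMap.smul_apply]
    module
  have hTxs : T xs = 0 := by
    have : xs ∈ LinearMap.ker (T : G →ₗ[ℝ] H) := by
      rw [hker]; exact Submodule.mem_span_singleton_self xs
    exact this
  have hinner_xs : (inner ℝ xs xs : ℝ) = 1 := by
    rw [real_inner_self_eq_norm_sq, hxs]; norm_num
  have hB_inj : Function.Injective ⇑B := by
    have : ∀ x, B x = 0 → x = 0 := by
      intro x hx
      set t : ℝ := inner ℝ xs x with ht
      have hTx : T x = t • C xs := by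
        have : T x - t • C xs = 0 := by
          simpa [hBdef, hrapp, ht] using hx
        exact sub_eq_zero.1 this
      by_cases htz : t = 0
      · have hx0 : T x = 0 := by rw [hTx, htz, zero_smul]
        have : x ∈ Submodule.span ℝ {xs} := by rw [← hker]; exact hx0
        obtain ⟨a, ha⟩ := Submodule.mem_span_singleton.1 this
        have hta : t = a := by
          rw [ht, ← ha, real_inner_smul_right, hinner_xs, mul_one]
        rw [← ha, ← hta, htz, zero_smul]
      · exfalso
        apply hrange
        refine ⟨t⁻¹ • x, ?_⟩
        rw [map_smul, ContinuousLinearMap.coe_coe, hTx]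
        rw [smul_smul, inv_mul_cancel₀ htz, one_smul]
    intro a b hab
    have : B (a - b) = 0 := by rw [map_sub, hab, sub_self]
    have := this
    have h := ‹∀ x, B x = 0 → x = 0› (a - b) this
    exact sub_eq_zero.1 h
  have hIK_inj : Function.Injective ⇑(1 - K) := by
    intro a b hab
    apply hB_inj
    rw [hBK, hBK, hab]
  have hIK_surj := riesz_surjective hK_compact hIK_inj
  have hB_surj : Function.Surjective ⇑B := by
    intro h
    obtain ⟨x, hx⟩ := hIK_surj (S'.symm h)
    exact ⟨x, by rw [hBK, hx, S'.apply_symm_apply]⟩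
  have hB_bij : Function.Bijective ⇑B := ⟨hB_inj, hB_surj⟩
  -- the parametrization e
  set V : Submodule ℝ G := (Submodule.span ℝ {xs})ᗮ with hVdef
  set e : ℝ × V → G := fun p => (p.2 : G) + p.1 • xs with hedef
  have hinner_orth : ∀ x' : V, (inner ℝ xs (x' : G) : ℝ) = 0 := by
    intro x'
    exact x'.2 xs (Submodule.mem_span_singleton_self xs)
  have he_bij : Function.Bijective e := by
    constructor
    · rintro ⟨t, x'⟩ ⟨s, y'⟩ hab
      simp only [hedef] at hab
      have h1 : (inner ℝ xs ((x' : G) + t • xs) : ℝ) = t := by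
        rw [inner_add_right, real_inner_smul_right, hinner_orth, hinner_xs]; ring
      have h2 : (inner ℝ xs ((y' : G) + s • xs) : ℝ) = s := by
        rw [inner_add_right, real_inner_smul_right, hinner_orth, hinner_xs]; ring
      have hts : t = s := by rw [← h1, ← h2, hab]
      have hxy : (x' : G) = (y' : G) := by
        have := hab
        rw [hts] at this
        exact add_right_cancel this
      exact Prod.ext hts (Subtype.ext hxy)
    · intro g
      set t : ℝ := inner ℝ xs g with ht
      have hmem : g - t • xs ∈ V := by
        intro u hu
        obtain ⟨a, ha⟩ := Submodule.mem_span_singleton.1 hu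
        rw [← ha, real_inner_smul_left, inner_sub_right, real_inner_smul_right,
          hinner_xs, ← ht]
        ring
      exact ⟨(t, ⟨g - t • xs, hmem⟩), by simp [hedef]⟩
  have hcomp : ∀ p : ℝ × V, B (e p) = T (p.2 : G) - p.1 • C xs := by
    rintro ⟨t, x'⟩
    simp only [hedef, hBdef, ContinuousLinearMap.sub_apply, hrapp]
    rw [map_add, map_smul, hTxs, smul_zero, add_zero]
    rw [inner_add_right, real_inner_smul_right, hinner_orth, hinner_xs]
    ring_nf
  have hminus : Function.Bijective
      (fun p : ℝ × V => T (p.2 : G) - p.1 • C xs) := by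
    have : (fun p : ℝ × V => T (p.2 : G) - p.1 • C xs) = ⇑B ∘ e := by
      funext p; rw [Function.comp_apply, hcomp]
    rw [this]
    exact hB_bij.comp he_bij
  refine ⟨hminus, ?_⟩
  have hneg : Function.Bijective (fun p : ℝ × V => ((-p.1, p.2) : ℝ × V)) := by
    constructor
    · rintro ⟨t, x'⟩ ⟨s, y'⟩ h
      simp only [Prod.mk.injEq, neg_inj] at h
      exact Prod.ext h.1 h.2
    · rintro ⟨t, x'⟩; exact ⟨(-t, x'), by simp⟩
  have : (fun p : ℝ × V => T (p.2 : G) + p.1 • C xs) =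
      (fun p : ℝ × V => T (p.2 : G) - p.1 • C xs) ∘ (fun p => ((-p.1, p.2) : ℝ × V)) := by
    funext p
    simp [sub_eq_add_neg]
  rw [this]
  exact hminus.comp hneg
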